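/- Let n ≥ 1, s ∈ (0,1), let G be a Young function satisfying condition (cond) with exponents 1 < p⁻ ≤ p⁺ < ∞ and s·p⁺ < n, let G* be the critical Young function and set H = G* ∘ G^{-1}. Let Ω ⊂ ℝⁿ be open. Then for every measurable u on Ω with ‖u‖_{L^{G*}(Ω)} < ∞ one has ‖G(|u|)‖_{L^H(Ω)} ≤ max{ ‖u‖_{L^{G*}(Ω)}^{p⁺}, ‖u‖_{L^{G*}(Ω)}^{p⁻} }. -/

import Mathlib

open MeasureTheory Real Set Filter
open scoped ENNReal

noncomputable section

/-- A Young function `G` together with its right-continuous density `g`: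
`G t = ∫₀ᵗ g(τ) dτ` for `t ≥ 0`, where `g` is right-continuous, nondecreasing on `[0,∞)`,
`g 0 = 0`, `g t > 0` for `t > 0` and `g t → ∞` as `t → ∞`.  `G` is extended evenly
(`G (-t) = G t`) and `g` oddly (`g (-t) = -g t`). -/
structure YoungPair where
  g : ℝ → ℝ
  G : ℝ → ℝ
  g_odd : ∀ t, g (-t) = -g t
  g_zero : g 0 = 0
  g_pos : ∀ t : ℝ, 0 < t → 0 < g t
  g_mono : MonotoneOn g (Set.Ici 0)
  g_rightCont : ∀ t ∈ Set.Ici (0 : ℝ), ContinuousWithinAt g (Set.Ici t) t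
  g_atTop : Filter.Tendsto g Filter.atTop Filter.atTop
  G_even : ∀ t, G (-t) = G t
  G_eq : ∀ t : ℝ, 0 ≤ t → G t = ∫ τ in (0 : ℝ)..t, g τ

/-- Condition (cond): `p⁻ ≤ t·g(t)/G(t) ≤ p⁺` for all `t > 0`. -/
def YoungPair.Cond (Y : YoungPair) (pm pp : ℝ) : Prop :=
  ∀ t : ℝ, 0 < t → pm * Y.G t ≤ t * Y.g t ∧ t * Y.g t ≤ pp * Y.G t

/-- Euclidean space `ℝⁿ`. -/
abbrev Euc (n : ℕ) := EuclideanSpace ℝ (Fin n)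

/-- The `s`-Hölder quotient `D_s u(x,y) = (u x - u y)/|x-y|^s`. -/
def Ds (n : ℕ) (s : ℝ) (u : Euc n → ℝ) (x y : Euc n) : ℝ :=
  (u x - u y) / ‖x - y‖ ^ s

/-- The modular `Φ_G(u) = ∫_Ω G(|u|) dx` (as an extended real). -/
def modG (n : ℕ) (G : ℝ → ℝ) (Ω : Set (Euc n)) (u : Euc n → ℝ) : ℝ≥0∞ :=
  ∫⁻ x in Ω, ENNReal.ofReal (G |u x|)

/-- The Gagliardo modular `Φ_{s,G}(u) = ∬ G(|D_s u(x,y)|) dx dy/|x-y|ⁿ`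
(as an extended real). -/
def modsG (n : ℕ) (s : ℝ) (G : ℝ → ℝ) (u : Euc n → ℝ) : ℝ≥0∞ :=
  ∫⁻ p : Euc n × Euc n, ENNReal.ofReal (G |Ds n s u p.1 p.2| / ‖p.1 - p.2‖ ^ (n : ℝ))

/-- Membership in `W^{s,G}_0(Ω)`: measurable, finite modulars, vanishing a.e. outside `Ω`. -/
def MemW0 (n : ℕ) (s : ℝ) (G : ℝ → ℝ) (Ω : Set (Euc n)) (u : Euc n → ℝ) : Prop :=
  Measurable u ∧ modG n G Ω u + modsG n s G u < ⊤ ∧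
    ∀ᵐ x : Euc n ∂volume, x ∉ Ω → u x = 0

/-- `u` is a weak solution of `(-Δ_g)^s u = rhs(u)` in `Ω`, `u = 0` in `ℝⁿ ∖ Ω`:
for every `v ∈ W^{s,G}_0(Ω)` the defining double integral converges absolutely and equals
`∫_Ω rhs(u) v dx`. -/
def IsWeakSol (n : ℕ) (s : ℝ) (Y : YoungPair) (Ω : Set (Euc n)) (rhs : ℝ → ℝ)
    (u : Euc n → ℝ) : Prop :=
  MemW0 n s Y.G Ω u ∧
  ∀ v : Euc n → ℝ, MemW0 n s Y.G Ω v →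
    MeasureTheory.Integrable (fun p : Euc n × Euc n =>
      Y.g (Ds n s u p.1 p.2) * (v p.1 - v p.2) / ‖p.1 - p.2‖ ^ ((n : ℝ) + s)) ∧
    (∫ p : Euc n × Euc n,
        Y.g (Ds n s u p.1 p.2) * (v p.1 - v p.2) / ‖p.1 - p.2‖ ^ ((n : ℝ) + s)) =
      ∫ x in Ω, rhs (u x) * v x

/-- The Luxemburg norm `‖u‖_{L^Ψ(Ω)}` (with value `∞` when no admissible `λ` exists). -/
def luxNorm (n : ℕ) (Ψ : ℝ → ℝ) (Ω : Set (Euc n)) (u : Euc n → ℝ) : ℝ≥0∞ :=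
  sInf {lam : ℝ≥0∞ | 0 < lam ∧ lam ≠ ⊤ ∧
    (∫⁻ x in Ω, ENNReal.ofReal (Ψ (|u x| / lam.toReal))) ≤ 1}

/-- The Gagliardo seminorm `[u]_{s,G}` (with value `∞` when no admissible `λ` exists). -/
def gagSemi (n : ℕ) (s : ℝ) (G : ℝ → ℝ) (u : Euc n → ℝ) : ℝ≥0∞ :=
  sInf {lam : ℝ≥0∞ | 0 < lam ∧ lam ≠ ⊤ ∧
    modsG n s G (fun x => u x / lam.toReal) ≤ 1}


namespace YoungAux

variable (Y : YoungPair)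

lemma gmono : Monotone Y.g := by
  intro a b hab
  rcases le_or_gt 0 a with ha | ha
  · exact Y.g_mono (Set.mem_Ici.mpr ha) (Set.mem_Ici.mpr (ha.trans hab)) hab
  · rcases le_or_gt 0 b with hb | hb
    · have h1 : Y.g 0 ≤ Y.g (-a) :=
        Y.g_mono (Set.mem_Ici.mpr le_rfl) (Set.mem_Ici.mpr (by linarith)) (by linarith)
      have h2 : Y.g 0 ≤ Y.g b :=
        Y.g_mono (Set.mem_Ici.mpr le_rfl) (Set.mem_Ici.mpr hb) hb
      have ea := Y.g_odd (-a)
      rw [neg_neg] at ea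
      rw [Y.g_zero] at h1 h2
      linarith
    · have h3 : Y.g (-b) ≤ Y.g (-a) :=
        Y.g_mono (Set.mem_Ici.mpr (by linarith)) (Set.mem_Ici.mpr (by linarith)) (by linarith)
      have ea := Y.g_odd (-a); have eb := Y.g_odd (-b)
      rw [neg_neg] at ea eb
      linarith

lemma g_nonneg {t : ℝ} (ht : 0 ≤ t) : 0 ≤ Y.g t := by
  have := gmono Y ht
  rwa [Y.g_zero] at this

lemma G_zero : Y.G 0 = 0 := by
  rw [Y.G_eq 0 le_rfl, intervalIntegral.integral_same]

lemma Gmono : MonotoneOn Y.G (Set.Ici 0) := by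
  intro a ha b hb hab
  rw [Set.mem_Ici] at ha hb
  rw [Y.G_eq a ha, Y.G_eq b hb]
  have h1 : IntervalIntegrable Y.g volume 0 a := (gmono Y).intervalIntegrable
  have h2 : IntervalIntegrable Y.g volume a b := (gmono Y).intervalIntegrable
  rw [← intervalIntegral.integral_add_adjacent_intervals h1 h2]
  have h3 : 0 ≤ ∫ τ in a..b, Y.g τ :=
    intervalIntegral.integral_nonneg hab (fun u hu => g_nonneg Y (ha.trans hu.1))
  linarith

lemma G_nonneg {t : ℝ} (ht : 0 ≤ t) : 0 ≤ Y.G t := by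
  have := Gmono Y (Set.mem_Ici.mpr le_rfl) (Set.mem_Ici.mpr ht) ht
  rwa [G_zero] at this

lemma G_pos {t : ℝ} (ht : 0 < t) : 0 < Y.G t := by
  rw [Y.G_eq t ht.le]
  have h1 : IntervalIntegrable Y.g volume 0 (t/2) := (gmono Y).intervalIntegrable
  have h2 : IntervalIntegrable Y.g volume (t/2) t := (gmono Y).intervalIntegrable
  rw [← intervalIntegral.integral_add_adjacent_intervals h1 h2]
  have h3 : 0 ≤ ∫ τ in (0:ℝ)..(t/2), Y.g τ :=
    intervalIntegral.integral_nonneg (by linarith) (fun u hu => g_nonneg Y hu.1)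
  have h4 : (∫ τ in (t/2)..t, (fun _ => Y.g (t/2)) τ) ≤ ∫ τ in (t/2)..t, Y.g τ := by
    apply intervalIntegral.integral_mono_on (by linarith) (intervalIntegrable_const) h2
    intro u hu
    exact gmono Y hu.1
  rw [intervalIntegral.integral_const, smul_eq_mul] at h4
  have h5 : 0 < (t - t/2) * Y.g (t/2) :=
    mul_pos (by linarith) (Y.g_pos _ (by linarith))
  linarith

lemma GcontOn : ContinuousOn Y.G (Set.Ici 0) := by
  have hc : Continuous fun b => ∫ τ in (0:ℝ)..b, Y.g τ :=
    intervalIntegral.continuous_primitive (fun a b => (gmono Y).intervalIntegrable) 0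
  exact hc.continuousOn.congr (fun x hx => Y.G_eq x hx)

lemma G_rderiv {x : ℝ} (hx : 0 ≤ x) : HasDerivWithinAt Y.G (Y.g x) (Set.Ici x) x := by
  have hP : HasDerivWithinAt (fun u => ∫ τ in (0:ℝ)..u, Y.g τ) (Y.g x) (Set.Ici x) x :=
    intervalIntegral.integral_hasDerivWithinAt_right ((gmono Y).intervalIntegrable)
      ⟨Set.univ, Filter.univ_mem, ((gmono Y).measurable.aestronglyMeasurable)⟩
      ((Y.g_rightCont x hx).mono Set.Ioi_subset_Ici_self)
  exact hP.congr (fun y hy => Y.G_eq y (hx.trans hy)) (Y.G_eq x hx)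

lemma comp_rderiv {t : ℝ} (ht : 0 < t) (τ : ℝ) :
    HasDerivWithinAt (fun τ => Y.G (t * Real.exp τ))
      (Y.g (t * Real.exp τ) * (t * Real.exp τ)) (Set.Ici τ) τ := by
  have hh : HasDerivAt (fun τ => t * Real.exp τ) (t * Real.exp τ) τ :=
    (Real.hasDerivAt_exp τ).const_mul t
  have hG := G_rderiv Y (x := t * Real.exp τ) (by positivity)
  exact hG.comp τ hh.hasDerivWithinAt (fun y hy =>
    Set.mem_Ici.mpr (mul_le_mul_of_nonneg_left (Real.exp_le_exp.mpr hy) ht.le))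

lemma comp_contOn {t : ℝ} (ht : 0 < t) (a b : ℝ) :
    ContinuousOn (fun τ => Y.G (t * Real.exp τ)) (Set.Icc a b) :=
  (GcontOn Y).comp (continuous_const.mul Real.continuous_exp).continuousOn
    (fun τ _ => Set.mem_Ici.mpr (by positivity))

lemma scale_up {pm pp : ℝ} (hY : Y.Cond pm pp) {t a : ℝ} (ht : 0 ≤ t) (ha : 1 ≤ a) :
    Y.G (a * t) ≤ a ^ pp * Y.G t := by
  rcases eq_or_lt_of_le ht with h0 | ht
  · rw [← h0, mul_zero, G_zero, mul_zero]
  have ha0 : 0 < a := lt_of_lt_of_le one_pos ha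
  set c := Real.log a with hc
  have hc0 : 0 ≤ c := Real.log_nonneg ha
  set f : ℝ → ℝ := fun τ => Real.exp (-pp * τ) * Y.G (t * Real.exp τ) with hf
  set f' : ℝ → ℝ := fun τ => Real.exp (-pp * τ) * (-pp * 1) * Y.G (t * Real.exp τ)
      + Real.exp (-pp * τ) * (Y.g (t * Real.exp τ) * (t * Real.exp τ)) with hf'
  have key : ∀ x ∈ Set.Icc 0 c, f x ≤ Y.G t := by
    apply image_le_of_deriv_right_le_deriv_boundary
      (B := fun _ => Y.G t) (B' := fun _ => 0) (f' := f')
    · exact ((Real.continuous_exp.comp (continuous_const.mul continuous_id)).continuousOn).mul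
        (comp_contOn Y ht 0 c)
    · intro x hx
      exact (((hasDerivAt_id x).const_mul (-pp)).exp.hasDerivWithinAt).mul (comp_rderiv Y ht x)
    · simp [hf]
    · exact continuousOn_const
    · intro x hx; exact hasDerivWithinAt_const x _ _
    · intro x hx
      set X := t * Real.exp x with hX
      have hXpos : 0 < X := by positivity
      have hcond := (hY X hXpos).2
      have hexp : 0 < Real.exp (-pp * x) := Real.exp_pos _
      simp only [hf']
      rw [← hX]
      nlinarith [mul_nonneg hexp.le (sub_nonneg.mpr hcond)]
  have hkey := key c ⟨hc0, le_rfl⟩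
  have hec : Real.exp c = a := Real.exp_log ha0
  have hrw : Real.exp (-pp * c) = (a ^ pp)⁻¹ := by
    rw [← Real.rpow_neg ha0.le, Real.rpow_def_of_pos ha0, hc]
    ring_nf
  rw [hf] at hkey
  simp only [hec, hrw] at hkey
  have hap : 0 < a ^ pp := Real.rpow_pos_of_pos ha0 pp
  rw [mul_comm t a] at hkey
  calc Y.G (a * t) = a ^ pp * ((a ^ pp)⁻¹ * Y.G (a * t)) := by field_simp
    _ ≤ a ^ pp * Y.G t := by
        exact mul_le_mul_of_nonneg_left hkey hap.le

lemma scale_low {pm pp : ℝ} (hY : Y.Cond pm pp) (hpm : 0 < pm) {t b : ℝ}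
    (ht : 0 ≤ t) (hb : 1 ≤ b) :
    b ^ pm * Y.G t ≤ Y.G (b * t) := by
  rcases eq_or_lt_of_le ht with h0 | ht
  · rw [← h0, mul_zero, G_zero, mul_zero]
  have hb0 : 0 < b := lt_of_lt_of_le one_pos hb
  set c := Real.log b with hc
  have hc0 : 0 ≤ c := Real.log_nonneg hb
  have hec : Real.exp c = b := Real.exp_log hb0
  have step : ∀ q : ℝ, 0 < q → q < pm → b ^ q * Y.G t ≤ Y.G (b * t) := by
    intro q hq0 hqpm
    have key : ∀ x ∈ Set.Icc 0 c, Real.exp (q * x) * Y.G t ≤ Y.G (t * Real.exp x) := by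
      apply image_le_of_deriv_right_lt_deriv_boundary'
        (f := fun τ => Real.exp (q * τ) * Y.G t)
        (f' := fun τ => Real.exp (q * τ) * (q * 1) * Y.G t)
        (B := fun τ => Y.G (t * Real.exp τ))
        (B' := fun τ => Y.g (t * Real.exp τ) * (t * Real.exp τ))
      · exact ((Real.continuous_exp.comp (continuous_const.mul continuous_id)).mul
          continuous_const).continuousOn
      · intro x hx
        exact ((((hasDerivAt_id x).const_mul q).exp).mul_const (Y.G t)).hasDerivWithinAt
      · simp
      · exact comp_contOn Y ht 0 c
      · intro x hx; exact comp_rderiv Y ht x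
      · intro x hx heq
        set X := t * Real.exp x with hX
        have hXpos : 0 < X := by positivity
        have hcond := (hY X hXpos).1
        have hGX : 0 < Y.G X := G_pos Y hXpos
        have h1 : Real.exp (q * x) * (q * 1) * Y.G t = q * (Real.exp (q * x) * Y.G t) := by ring
        rw [h1, heq]
        have : q * Y.G X < pm * Y.G X := by nlinarith
        nlinarith
    have hkey := key c ⟨hc0, le_rfl⟩
    have hrw : Real.exp (q * c) = b ^ q := by
      rw [Real.rpow_def_of_pos hb0, hc]; ring_nf
    rw [hrw, hec, mul_comm t b] at hkey
    exact hkey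
  have cont : Tendsto (fun q : ℝ => b ^ q * Y.G t) (nhdsWithin pm (Set.Iio pm))
      (nhds (b ^ pm * Y.G t)) := by
    apply Tendsto.mono_left ?_ nhdsWithin_le_nhds
    apply Continuous.tendsto
    have : Continuous fun q : ℝ => b ^ q := by
      have : (fun q : ℝ => b ^ q) = fun q => Real.exp (Real.log b * q) := by
        funext q; rw [Real.rpow_def_of_pos hb0]
      rw [this]
      exact Real.continuous_exp.comp (continuous_const.mul continuous_id)
    exact this.mul continuous_const
  apply le_of_tendsto cont
  filter_upwards [Ioo_mem_nhdsLT_of_mem (Set.mem_Ioc.mpr ⟨hpm, le_rfl⟩)] with q hq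
  exact step q hq.1 hq.2

lemma scale_max {pm pp : ℝ} (hY : Y.Cond pm pp) (hpm : 0 < pm) {t l : ℝ}
    (ht : 0 ≤ t) (hl : 0 < l) :
    Y.G (l * t) ≤ max (l ^ pp) (l ^ pm) * Y.G t := by
  rcases le_or_gt 1 l with h1 | h1
  · exact (scale_up Y hY ht h1).trans
      (mul_le_mul_of_nonneg_right (le_max_left _ _) (G_nonneg Y ht))
  · have hinv : 1 ≤ l⁻¹ := (one_le_inv_iff₀).mpr ⟨hl, h1.le⟩
    have := scale_low Y hY hpm (t := l * t) (b := l⁻¹) (by positivity) hinv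
    rw [show l⁻¹ * (l * t) = t by field_simp] at this
    rw [Real.inv_rpow hl.le] at this
    have hp : 0 < l ^ pm := Real.rpow_pos_of_pos hl pm
    have h2 : Y.G (l * t) ≤ l ^ pm * Y.G t := by
      calc Y.G (l * t) = l ^ pm * ((l ^ pm)⁻¹ * Y.G (l * t)) := by field_simp
        _ ≤ l ^ pm * Y.G t := mul_le_mul_of_nonneg_left this hp.le
    exact h2.trans (mul_le_mul_of_nonneg_right (le_max_right _ _) (G_nonneg Y ht))

end YoungAux

/-- `‖G(|u|)‖_{L^H(Ω)} ≤ max{‖u‖_{L^{G*}(Ω)}^{p⁺}, ‖u‖_{L^{G*}(Ω)}^{p⁻}}`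
where `H = G* ∘ G⁻¹`. -/
theorem statement12 (n : ℕ) (hn : 1 ≤ n) (s : ℝ) (hs : s ∈ Set.Ioo (0 : ℝ) 1)
    (pm pp : ℝ) (hpm : 1 < pm) (hpmpp : pm ≤ pp) (hspp : s * pp < n)
    (Y : YoungPair) (hY : Y.Cond pm pp)
    (Ginv Gstar : ℝ → ℝ)
    (hGinv : ∀ t : ℝ, 0 ≤ t → 0 ≤ Ginv t ∧ Y.G (Ginv t) = t)
    (hGinv' : ∀ t : ℝ, 0 ≤ t → Ginv (Y.G t) = t)
    (hGstar : ∀ r : ℝ, 0 ≤ r →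
      Gstar (∫ τ in (0 : ℝ)..r, Ginv τ * τ ^ (-((n : ℝ) + s) / n)) = r)
    (hGstar' : ∀ t : ℝ, 0 ≤ t → 0 ≤ Gstar t ∧
      (∫ τ in (0 : ℝ)..(Gstar t), Ginv τ * τ ^ (-((n : ℝ) + s) / n)) = t)
    (Ω : Set (Euc n)) (hΩo : IsOpen Ω)
    (u : Euc n → ℝ) (hu : Measurable u) (hfin : luxNorm n Gstar Ω u < ⊤) :
    luxNorm n (fun t => Gstar (Ginv t)) Ω (fun x => Y.G |u x|) ≤
      max (luxNorm n Gstar Ω u ^ pp) (luxNorm n Gstar Ω u ^ pm) := by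
  classical
  have hpm0 : 0 < pm := lt_trans one_pos hpm
  have hpp0 : 0 < pp := lt_of_lt_of_le hpm0 hpmpp
  have hGinvMono : MonotoneOn Ginv (Set.Ici 0) := by
    intro a ha b hb hab
    by_contra hlt
    push_neg at hlt
    have h1 : Y.G (Ginv b) ≤ Y.G (Ginv a) :=
      YoungAux.Gmono Y (Set.mem_Ici.mpr (hGinv b hb).1) (Set.mem_Ici.mpr (hGinv a ha).1) hlt.le
    rw [(hGinv a ha).2, (hGinv b hb).2] at h1
    have hab' : a = b := le_antisymm hab h1
    rw [hab'] at hlt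
    exact lt_irrefl _ hlt
  have hGstarMono : MonotoneOn Gstar (Set.Ici 0) := by
    intro a ha b hb hab
    rcases eq_or_lt_of_le hab with rfl | hab'
    · exact le_rfl
    by_contra hlt
    push_neg at hlt
    set e : ℝ := -((n : ℝ) + s) / n with he
    set h : ℝ → ℝ := fun τ => Ginv τ * τ ^ e with hh
    have hr1 : 0 ≤ Gstar b := (hGstar' b hb).1
    have hr2 : 0 ≤ Gstar a := (hGstar' a ha).1
    have hint1 := (hGstar' a ha).2
    have hint2 := (hGstar' b hb).2
    have hnonneg : ∀ τ : ℝ, 0 ≤ τ → 0 ≤ h τ := fun τ hτ =>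
      mul_nonneg (hGinv τ hτ).1 (Real.rpow_nonneg hτ e)
    by_cases hI : IntervalIntegrable h volume 0 (Gstar a)
    · have huIcc : Set.uIcc (0 : ℝ) (Gstar a) = Set.Icc 0 (Gstar a) := Set.uIcc_of_le hr2
      have hsub : IntervalIntegrable h volume 0 (Gstar b) := by
        apply hI.mono_set
        rw [huIcc, Set.uIcc_of_le hr1]
        exact Set.Icc_subset_Icc le_rfl hlt.le
      have hsub2 : IntervalIntegrable h volume (Gstar b) (Gstar a) := by
        apply hI.mono_set
        rw [huIcc, Set.uIcc_of_le hlt.le]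
        exact Set.Icc_subset_Icc hr1 le_rfl
      have hadd := intervalIntegral.integral_add_adjacent_intervals hsub hsub2
      have hpos : 0 ≤ ∫ τ in (Gstar b)..(Gstar a), h τ :=
        intervalIntegral.integral_nonneg hlt.le (fun τ hτ => hnonneg τ (hr1.trans hτ.1))
      rw [hint1, hint2] at hadd
      linarith
    · have ha0 : a = 0 := by rw [← hint1, intervalIntegral.integral_undef hI]
      rcases eq_or_lt_of_le hr1 with h0 | h0
      · have hb0 : b = 0 := by rw [← hint2, ← h0, intervalIntegral.integral_same]
        rw [ha0, hb0] at hab'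
        exact lt_irrefl _ hab'
      · have hIb : IntervalIntegrable h volume (Gstar b) (Gstar a) := by
          apply IntervalIntegrable.mul_continuousOn
          · apply MonotoneOn.intervalIntegrable
            apply hGinvMono.mono
            intro τ hτ
            rw [Set.uIcc_of_le hlt.le] at hτ
            exact Set.mem_Ici.mpr (hr1.trans hτ.1)
          · intro τ hτ
            rw [Set.uIcc_of_le hlt.le] at hτ
            exact (Real.continuousAt_rpow_const τ e
              (Or.inl (ne_of_gt (lt_of_lt_of_le h0 hτ.1)))).continuousWithinAt
        have hI0b : ¬ IntervalIntegrable h volume 0 (Gstar b) := fun hc => hI (hc.trans hIb)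
        have hb0 : b = 0 := by rw [← hint2, intervalIntegral.integral_undef hI0b]
        rw [ha0, hb0] at hab'
        exact lt_irrefl _ hab'
  have hscale : ∀ l : ℝ, 0 < l → ∀ t : ℝ, 0 ≤ t →
      Y.G (l * t) ≤ max (l ^ pp) (l ^ pm) * Y.G t :=
    fun l hl t ht => YoungAux.scale_max Y hY hpm0 ht hl
  have key : ∀ lam ∈ {lam : ℝ≥0∞ | 0 < lam ∧ lam ≠ ⊤ ∧
      (∫⁻ x in Ω, ENNReal.ofReal (Gstar (|u x| / lam.toReal))) ≤ 1},
      luxNorm n (fun t => Gstar (Ginv t)) Ω (fun x => Y.G |u x|) ≤ max (lam ^ pp) (lam ^ pm) := by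
    rintro lam ⟨hl0, hltop, hint⟩
    have hl : 0 < lam.toReal := ENNReal.toReal_pos hl0.ne' hltop
    have hppne : lam ^ pp ≠ ⊤ := ENNReal.rpow_ne_top_of_nonneg hpp0.le hltop
    have hpmne : lam ^ pm ≠ ⊤ := ENNReal.rpow_ne_top_of_nonneg hpm0.le hltop
    have hmtoReal : (max (lam ^ pp) (lam ^ pm)).toReal
        = max (lam.toReal ^ pp) (lam.toReal ^ pm) := by
      rw [ENNReal.toReal_max hppne hpmne, ENNReal.toReal_rpow, ENNReal.toReal_rpow]
    simp only [luxNorm]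
    apply sInf_le
    refine ⟨lt_max_iff.mpr (Or.inl (ENNReal.rpow_pos hl0 hltop)), ?_, ?_⟩
    · rcases max_cases (lam ^ pp) (lam ^ pm) with ⟨h, _⟩ | ⟨h, _⟩ <;> rw [h] <;> assumption
    · refine le_trans (lintegral_mono fun x => ?_) hint
      apply ENNReal.ofReal_le_ofReal
      rw [hmtoReal]
      have hm0 : 0 < max (lam.toReal ^ pp) (lam.toReal ^ pm) :=
        lt_max_of_lt_left (Real.rpow_pos_of_pos hl pp)
      have hux : (0 : ℝ) ≤ |u x| := abs_nonneg _
      have hGx : 0 ≤ Y.G |u x| := YoungAux.G_nonneg Y hux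
      rw [abs_of_nonneg hGx]
      have hw : 0 ≤ |u x| / lam.toReal := div_nonneg hux hl.le
      have h1 : Y.G |u x| ≤ max (lam.toReal ^ pp) (lam.toReal ^ pm)
          * Y.G (|u x| / lam.toReal) := by
        have h1' := hscale lam.toReal hl (|u x| / lam.toReal) hw
        rw [show lam.toReal * (|u x| / lam.toReal) = |u x| by field_simp] at h1'
        exact h1'
      have h2 : Y.G |u x| / max (lam.toReal ^ pp) (lam.toReal ^ pm)
          ≤ Y.G (|u x| / lam.toReal) := by
        rw [div_le_iff₀ hm0, mul_comm]
        exact h1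
      have h3 : Ginv (Y.G |u x| / max (lam.toReal ^ pp) (lam.toReal ^ pm))
          ≤ |u x| / lam.toReal := by
        have h3' := hGinvMono (Set.mem_Ici.mpr (div_nonneg hGx hm0.le))
          (Set.mem_Ici.mpr (YoungAux.G_nonneg Y hw)) h2
        rwa [hGinv' _ hw] at h3'
      exact hGstarMono (Set.mem_Ici.mpr (hGinv _ (div_nonneg hGx hm0.le)).1)
        (Set.mem_Ici.mpr hw) h3
  have hkey2 : ∀ c : ℝ≥0∞, luxNorm n Gstar Ω u < c →
      luxNorm n (fun t => Gstar (Ginv t)) Ω (fun x => Y.G |u x|)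
        ≤ max (c ^ pp) (c ^ pm) := by
    intro c hc
    obtain ⟨lam, hlamS, hlamlt⟩ := sInf_lt_iff.mp hc
    exact (key lam hlamS).trans (max_le_max (ENNReal.rpow_le_rpow hlamlt.le hpp0.le)
      (ENNReal.rpow_le_rpow hlamlt.le hpm0.le))
  have hne : (nhdsWithin (luxNorm n Gstar Ω u)
      (Set.Ioi (luxNorm n Gstar Ω u))).NeBot :=
    nhdsGT_neBot_of_exists_gt ⟨⊤, hfin⟩
  have htend : Filter.Tendsto (fun c : ℝ≥0∞ => max (c ^ pp) (c ^ pm))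
      (nhdsWithin (luxNorm n Gstar Ω u) (Set.Ioi (luxNorm n Gstar Ω u)))
      (nhds (max (luxNorm n Gstar Ω u ^ pp) (luxNorm n Gstar Ω u ^ pm))) :=
    ((ENNReal.continuous_rpow_const.max ENNReal.continuous_rpow_const).tendsto _).mono_left
      nhdsWithin_le_nhds
  exact ge_of_tendsto htend (eventually_mem_nhdsWithin.mono fun c hc => hkey2 c hc)


end
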